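/- An infinite word u = u_0 u_1 u_2 … over {0,1}, not equal to 0^ω, satisfies u_0 u_1 u_2 … ≤ u_i u_{i+1} u_{i+2} … ≤ 1 u_1 u_2 … lexicographically for all i ≥ 0 if and only if u is an S-adic word: u is a limit word of a primitive sequence of substitutions from S = {τ_h : h ≥ 0}, or u = σ(0·1^ω) or u = σ(1^ω) for some finite composition σ of substitutions in S. -/

import Mathlib

def tauL (h : ℕ) (b : Bool) : List Bool :=
  if b then List.replicate h false ++ [true] else List.replicate (h + 1) false ++ [true]

def joinW (f : ℕ → List Bool) : ℕ → Bool :=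
  fun n => (((List.range (n + 1)).map f).flatten).getD n false

def applyTau (h : ℕ) (u : ℕ → Bool) : ℕ → Bool :=
  joinW fun n => tauL h (u n)

def applyComp (hs : List ℕ) (u : ℕ → Bool) : ℕ → Bool :=
  hs.foldr applyTau u

def lexLt (u v : ℕ → Bool) : Prop :=
  ∃ n, (∀ k < n, u k = v k) ∧ u n = false ∧ v n = true

def lexLe (u v : ℕ → Bool) : Prop := u = v ∨ lexLt u v

/-- u is the limit word of a primitive sequence of substitutions (τ_{hs n})_{n≥0},
primitive meaning hs n ≠ 0 for infinitely many n. -/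
def IsPrimitiveLimitWord (u : ℕ → Bool) : Prop :=
  ∃ hs : ℕ → ℕ, (∀ N, ∃ n ≥ N, hs n ≠ 0) ∧
    ∃ U : ℕ → ℕ → Bool, U 0 = u ∧ ∀ n, U n = applyTau (hs n) (U (n + 1))


-- ===== basic lex lemmas =====

theorem lexLt_asymm {u v : ℕ → Bool} (h1 : lexLt u v) (h2 : lexLt v u) : False := by
  obtain ⟨n, ha, hf, ht⟩ := h1
  obtain ⟨m, hb, hf', ht'⟩ := h2
  rcases lt_trichotomy n m with h | h | h
  · have := hb n h; rw [hf, ht] at this; simp at this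
  · subst h; rw [hf] at ht'; simp at ht'
  · have := ha m h; rw [hf', ht'] at this; simp at this

theorem lexLt_ne {u v : ℕ → Bool} (h1 : lexLt u v) : u ≠ v := by
  obtain ⟨n, _, hf, ht⟩ := h1
  intro he; rw [he, ht] at hf; simp at hf

theorem lexLt_irrefl {u : ℕ → Bool} (h1 : lexLt u u) : False := lexLt_ne h1 rfl

theorem not_lexLe {u v : ℕ → Bool} (h : ¬ lexLe u v) : lexLt v u := by
  have hne : u ≠ v := fun he => h (Or.inl he)
  have hex : ∃ n, u n ≠ v n := by
    by_contra hc; push_neg at hc; exact hne (funext hc)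
  classical
  let n := Nat.find hex
  have hn : u n ≠ v n := Nat.find_spec hex
  have hagree : ∀ k < n, u k = v k := fun k hk => by
    by_contra hc; exact absurd hk (not_lt.mpr (Nat.find_le hc))
  rcases Bool.eq_false_or_eq_true (u n) with hu | hu
  · rcases Bool.eq_false_or_eq_true (v n) with hv | hv
    · rw [hu, hv] at hn; exact absurd rfl hn
    · exact ⟨n, fun k hk => (hagree k hk).symm, hv, hu⟩
  · rcases Bool.eq_false_or_eq_true (v n) with hv | hv
    · exact absurd (Or.inr ⟨n, hagree, hu, hv⟩) h
    · rw [hu, hv] at hn; exact absurd rfl hn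

theorem lexLe_not_lt {u v : ℕ → Bool} (h : lexLe u v) (h' : lexLt v u) : False := by
  rcases h with h | h
  · subst h; exact lexLt_irrefl h'
  · exact lexLt_asymm h h'

-- ===== prep / agree =====

def prep (l : List Bool) (u : ℕ → Bool) : ℕ → Bool :=
  fun n => if n < l.length then l.getD n false else u (n - l.length)

def agree (k : ℕ) (u v : ℕ → Bool) : Prop := ∀ j < k, u j = v j

theorem prep_lt {l : List Bool} {u : ℕ → Bool} {n : ℕ} (h : n < l.length) :
    prep l u n = l.getD n false := if_pos h

theorem prep_ge {l : List Bool} {u : ℕ → Bool} {n : ℕ} (h : l.length ≤ n) :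
    prep l u n = u (n - l.length) := if_neg (not_lt.mpr h)

theorem prep_add {l : List Bool} {u : ℕ → Bool} {n : ℕ} :
    prep l u (l.length + n) = u n := by
  rw [prep_ge (Nat.le_add_right _ _), Nat.add_sub_cancel_left]

def shiftk (i : ℕ) (u : ℕ → Bool) : ℕ → Bool := fun n => u (n + i)

theorem shiftk_zero (u : ℕ → Bool) : shiftk 0 u = u := rfl

theorem shiftk_shiftk (a b : ℕ) (u : ℕ → Bool) :
    shiftk b (shiftk a u) = shiftk (a + b) u := by
  funext n; simp [shiftk, Nat.add_assoc, Nat.add_comm b a]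

theorem shiftk_prep (l : List Bool) (u : ℕ → Bool) : shiftk l.length (prep l u) = u := by
  funext n
  simp only [shiftk]
  rw [Nat.add_comm, prep_add]

theorem shiftk_prep' {l : List Bool} (u : ℕ → Bool) {r : ℕ} (h : r ≤ l.length) :
    shiftk r (prep l u) = prep (l.drop r) u := by
  funext n
  simp only [shiftk, prep, List.length_drop]
  rcases lt_or_ge n (l.length - r) with hn | hn
  · rw [if_pos hn, if_pos (by omega)]
    simp only [List.getD_eq_getElem?_getD, List.getElem?_drop]
    rw [Nat.add_comm]
  · rw [if_neg (by omega), if_neg (by omega)]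
    congr 1; omega

theorem prep_mono_lt {l : List Bool} {x y : ℕ → Bool} (h : lexLt x y) :
    lexLt (prep l x) (prep l y) := by
  obtain ⟨n, ha, hf, ht⟩ := h
  refine ⟨l.length + n, fun k hk => ?_, ?_, ?_⟩
  · rcases lt_or_ge k l.length with hk' | hk'
    · rw [prep_lt hk', prep_lt hk']
    · rw [prep_ge hk', prep_ge hk']; exact ha _ (by omega)
  · rw [prep_add]; exact hf
  · rw [prep_add]; exact ht

theorem prep_mono {l : List Bool} {x y : ℕ → Bool} (h : lexLe x y) :
    lexLe (prep l x) (prep l y) := by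
  rcases h with h | h
  · exact Or.inl (by rw [h])
  · exact Or.inr (prep_mono_lt h)

theorem prep_reflect {l : List Bool} {x y : ℕ → Bool} (h : lexLe (prep l x) (prep l y)) :
    lexLe x y := by
  by_contra hc
  exact lexLe_not_lt h (prep_mono_lt (not_lexLe hc))

theorem agree_mono {k k' : ℕ} {x y : ℕ → Bool} (h : k ≤ k') (ha : agree k' x y) :
    agree k x y := fun j hj => ha j (lt_of_lt_of_le hj h)

theorem prep_agree {l : List Bool} {x y : ℕ → Bool} {m : ℕ} (h : agree m x y) :
    agree (l.length + m) (prep l x) (prep l y) := by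
  intro j hj
  rcases lt_or_ge j l.length with hj' | hj'
  · rw [prep_lt hj', prep_lt hj']
  · rw [prep_ge hj', prep_ge hj']; exact h _ (by omega)

-- ===== tauL facts =====

def repOne (m : ℕ) : List Bool := List.replicate m false ++ [true]

theorem tauL_eq (h : ℕ) (b : Bool) : tauL h b = repOne (h + cond b 0 1) := by
  cases b <;> rfl

theorem repOne_length (m : ℕ) : (repOne m).length = m + 1 := by
  simp [repOne]

theorem repOne_getD (m k : ℕ) : (repOne m).getD k false = decide (k = m) := by
  rcases lt_trichotomy k m with h | h | h
  · rw [repOne, List.getD_append _ _ _ _ (by simpa using h)]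
    simp [List.getD_eq_getElem?_getD, List.getElem?_replicate, h, Nat.ne_of_lt h]
  · subst h
    rw [repOne, List.getD_append_right _ _ _ _ (by simp)]
    simp
  · rw [List.getD_eq_getElem?_getD, List.getElem?_eq_none (by simp [repOne_length]; omega)]
    simp [Nat.ne_of_gt h]

theorem tauL_length (h : ℕ) (b : Bool) : (tauL h b).length = h + cond b 0 1 + 1 := by
  rw [tauL_eq, repOne_length]

theorem tauL_length_pos (h : ℕ) (b : Bool) : 0 < (tauL h b).length := by
  rw [tauL_length]; omega

theorem tauL_getD (h : ℕ) (b : Bool) (k : ℕ) :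
    (tauL h b).getD k false = decide (k = h + cond b 0 1) := by
  rw [tauL_eq, repOne_getD]

-- ===== applyTau structure =====

theorem flatten_range_length_ge (g : ℕ → List Bool) (hg : ∀ j, 0 < (g j).length) (t : ℕ) :
    t ≤ (((List.range t).map g).flatten).length := by
  induction t with
  | zero => simp
  | succ t ih =>
    rw [List.range_succ, List.map_append, List.flatten_append]
    simp only [List.length_append]
    have := hg t
    simp only [List.map_cons, List.map_nil, List.flatten_cons, List.flatten_nil,
      List.append_nil]
    omega

theorem flatten_range_stable (g : ℕ → List Bool) (hg : ∀ j, 0 < (g j).length)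
    {k m : ℕ} (h : k < m) :
    (((List.range m).map g).flatten).getD k false
      = (((List.range (k + 1)).map g).flatten).getD k false := by
  obtain ⟨d, rfl⟩ : ∃ d, m = (k + 1) + d := ⟨m - (k + 1), by omega⟩
  rw [List.range_add, List.map_append, List.flatten_append,
    List.getD_append _ _ _ _ (lt_of_lt_of_le (Nat.lt_succ_self k)
      (flatten_range_length_ge g hg (k + 1)))]

theorem joinW_stable (g : ℕ → List Bool) (hg : ∀ j, 0 < (g j).length) {k m : ℕ}
    (h : k < m) : joinW g k = (((List.range m).map g).flatten).getD k false :=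
  (flatten_range_stable g hg h).symm

theorem applyTau_step (h : ℕ) (u : ℕ → Bool) :
    applyTau h u = prep (tauL h (u 0)) (applyTau h (shiftk 1 u)) := by
  funext n
  set g : ℕ → List Bool := fun m => tauL h (u m) with hgdef
  have hg : ∀ j, 0 < (g j).length := fun j => tauL_length_pos h (u j)
  have hrange : ((List.range (n + 1)).map g).flatten
      = g 0 ++ ((List.range n).map (fun m => g (m + 1))).flatten := by
    rw [List.range_succ_eq_map]
    simp [List.flatten_cons, Function.comp_def]
  show joinW g n = _
  rw [joinW, hrange]
  rcases lt_or_ge n (g 0).length with hn | hn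
  · rw [List.getD_append _ _ _ _ hn, prep_lt hn]
  · rw [List.getD_append_right _ _ _ _ hn, prep_ge hn]
    show _ = joinW (fun m => tauL h (u (m + 1))) (n - (g 0).length)
    have hg' : ∀ j, 0 < ((fun m => g (m + 1)) j).length := fun j => hg (j + 1)
    rw [joinW_stable (fun m => g (m + 1)) hg' (show n - (g 0).length < n by
      have := hg 0; omega)]

theorem applyTau_mono_lt {h : ℕ} {x y : ℕ → Bool} (hlt : lexLt x y) :
    lexLt (applyTau h x) (applyTau h y) := by
  obtain ⟨n, ha, hf, ht⟩ := hlt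
  induction n generalizing x y with
  | zero =>
    rw [applyTau_step h x, applyTau_step h y, hf, ht]
    refine ⟨h, fun k hk => ?_, ?_, ?_⟩
    · rw [prep_lt (by rw [tauL_length]; omega), prep_lt (by rw [tauL_length]; omega),
        tauL_getD, tauL_getD]
      simp only [cond]
      have : ¬ (k = h + 1) := by omega
      have h2 : ¬ (k = h + 0) := by omega
      have h3 : ¬ (k = h) := by omega
      simp [this, h2, h3]
    · rw [prep_lt (by rw [tauL_length]; omega), tauL_getD]
      simp
    · rw [prep_lt (by rw [tauL_length]; omega), tauL_getD]
      simp
  | succ n ih =>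
    have h0 : x 0 = y 0 := ha 0 (Nat.succ_pos n)
    rw [applyTau_step h x, applyTau_step h y, h0]
    exact prep_mono_lt (ih (fun k hk => ha (k + 1) (by omega)) hf ht)

theorem applyTau_mono {h : ℕ} {x y : ℕ → Bool} (hle : lexLe x y) :
    lexLe (applyTau h x) (applyTau h y) := by
  rcases hle with he | hlt
  · exact Or.inl (by rw [he])
  · exact Or.inr (applyTau_mono_lt hlt)

theorem applyTau_reflect {h : ℕ} {x y : ℕ → Bool}
    (hle : lexLe (applyTau h x) (applyTau h y)) : lexLe x y := by
  by_contra hc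
  exact lexLe_not_lt hle (applyTau_mono_lt (not_lexLe hc))

theorem applyTau_agree {h k : ℕ} {x y : ℕ → Bool} (ha : agree k x y) :
    agree (k + h) (applyTau h x) (applyTau h y) := by
  induction k generalizing x y with
  | zero =>
    intro j hj
    rw [applyTau_step h x, applyTau_step h y,
      prep_lt (by rw [tauL_length]; omega), prep_lt (by rw [tauL_length]; omega),
      tauL_getD, tauL_getD]
    have : ¬ (j = h + cond (x 0) 0 1) := by cases x 0 <;> simp <;> omega
    have h2 : ¬ (j = h + cond (y 0) 0 1) := by cases y 0 <;> simp <;> omega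
    simp [this, h2]
  | succ k ih =>
    have h0 : x 0 = y 0 := ha 0 (Nat.succ_pos k)
    rw [applyTau_step h x, applyTau_step h y, h0]
    have htails : agree (k + h) (applyTau h (shiftk 1 x)) (applyTau h (shiftk 1 y)) :=
      ih (fun j hj => ha (j + 1) (by omega))
    have := prep_agree (l := tauL h (y 0)) htails
    refine agree_mono ?_ this
    have := tauL_length_pos h (y 0)
    omega

-- ===== position machinery =====

def posF (h : ℕ) (v : ℕ → Bool) : ℕ → ℕ
  | 0 => 0
  | m + 1 => posF h v m + (tauL h (v m)).length

theorem shiftk_at (u : ℕ → Bool) (i n : ℕ) : shiftk i u n = u (n + i) := rfl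

theorem shiftk_apply_zero (u : ℕ → Bool) (i : ℕ) : shiftk i u 0 = u i := by
  rw [shiftk_at, Nat.zero_add]

theorem shiftk_one_shiftk (m : ℕ) (v : ℕ → Bool) :
    shiftk 1 (shiftk m v) = shiftk (m + 1) v := shiftk_shiftk m 1 v

theorem applyTau_step' (h m : ℕ) (v : ℕ → Bool) :
    applyTau h (shiftk m v) = prep (tauL h (v m)) (applyTau h (shiftk (m + 1) v)) := by
  rw [applyTau_step h (shiftk m v), shiftk_apply_zero, shiftk_one_shiftk]

theorem applyTau_shift_pos (h : ℕ) (v : ℕ → Bool) (m : ℕ) :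
    shiftk (posF h v m) (applyTau h v) = applyTau h (shiftk m v) := by
  induction m with
  | zero => rfl
  | succ m ih =>
    have : posF h v (m + 1) = posF h v m + (tauL h (v m)).length := rfl
    rw [this, ← shiftk_shiftk, ih, applyTau_step' h m v, shiftk_prep]

theorem pos_decompose (h : ℕ) (v : ℕ → Bool) (i : ℕ) :
    ∃ m r, r < (tauL h (v m)).length ∧ i = posF h v m + r := by
  induction i with
  | zero => exact ⟨0, 0, tauL_length_pos h (v 0), rfl⟩
  | succ i ih =>
    obtain ⟨m, r, hr, hi⟩ := ih
    rcases lt_or_ge (r + 1) (tauL h (v m)).length with hlt | hge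
    · exact ⟨m, r + 1, hlt, by omega⟩
    · refine ⟨m + 1, 0, tauL_length_pos h (v (m + 1)), ?_⟩
      have : posF h v (m + 1) = posF h v m + (tauL h (v m)).length := rfl
      omega

theorem applyTau_block (h : ℕ) (v : ℕ → Bool) {m r : ℕ} (hr : r < (tauL h (v m)).length) :
    applyTau h v (posF h v m + r) = (tauL h (v m)).getD r false := by
  have h1 : applyTau h v (posF h v m + r) = shiftk (posF h v m) (applyTau h v) r := by
    rw [shiftk_at, Nat.add_comm]
  rw [h1, applyTau_shift_pos, applyTau_step', prep_lt hr]

theorem shiftk_pos_r (h : ℕ) (v : ℕ → Bool) {m r : ℕ} (hr : r ≤ (tauL h (v m)).length) :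
    shiftk (posF h v m + r) (applyTau h v)
      = prep ((tauL h (v m)).drop r) (applyTau h (shiftk (m + 1) v)) := by
  rw [← shiftk_shiftk, applyTau_shift_pos, applyTau_step', shiftk_prep' _ hr]

theorem repOne_drop {m r : ℕ} (hr : r ≤ m) :
    (repOne m).drop r = repOne (m - r) := by
  rw [repOne, List.drop_append_of_le_length (by simpa using hr), List.drop_replicate]
  rfl

-- fixed point uniqueness
theorem prep_fixed_unique {l : List Bool} (hl : 0 < l.length) {x y : ℕ → Bool}
    (hx : x = prep l x) (hy : y = prep l y) : x = y := by
  funext n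
  induction n using Nat.strong_induction_on with
  | _ n ih =>
    rcases lt_or_ge n l.length with hn | hn
    · rw [hx]; conv_rhs => rw [hy]
      rw [prep_lt hn, prep_lt hn]
    · rw [hx]; conv_rhs => rw [hy]
      rw [prep_ge hn, prep_ge hn, ih _ (by omega)]

-- ===== the condition =====

def oneP (u : ℕ → Bool) : ℕ → Bool := fun n => if n = 0 then true else u n

def Good (u : ℕ → Bool) : Prop :=
  ∀ i : ℕ, lexLe u (shiftk i u) ∧ lexLe (shiftk i u) (oneP u)

def wones : ℕ → Bool := fun _ => true

theorem shiftk_wones (i : ℕ) : shiftk i wones = wones := rfl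

theorem oneP_wones : oneP wones = wones := by
  funext n; simp [oneP, wones]

theorem good_wones : Good wones := by
  intro i
  constructor
  · exact Or.inl rfl
  · rw [shiftk_wones, oneP_wones]; exact Or.inl rfl

def wzo : ℕ → Bool := fun n => decide (0 < n)

theorem good_wzo : Good wzo := by
  intro i
  rcases Nat.eq_zero_or_pos i with rfl | hi
  · rw [shiftk_zero]
    refine ⟨Or.inl rfl, Or.inr ⟨0, by omega, by simp [wzo], by simp [oneP]⟩⟩
  · have hsh : shiftk i wzo = wones := by
      funext n; simp [shiftk, wzo, wones]; omega
    rw [hsh]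
    constructor
    · exact Or.inr ⟨0, by omega, by simp [wzo], rfl⟩
    · have : oneP wzo = wones := by
        funext n; cases n <;> simp [oneP, wzo, wones]
      rw [this]; exact Or.inl rfl

-- lexLe with all-false prefix
theorem lexLe_false_prefix {x y : ℕ → Bool} {c : ℕ} (h : lexLe x y)
    (hy : ∀ k < c, y k = false) : ∀ k < c, x k = false := by
  intro k hk
  rcases h with he | ⟨n, ha, hf, ht⟩
  · rw [he]; exact hy k hk
  · rcases lt_or_ge k n with h' | h'
    · rw [ha k h']; exact hy k hk
    · have hn : c ≤ n := by
        by_contra hc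
        rw [hy n (by omega)] at ht; simp at ht
      omega

theorem lexLt_of_prefix {x y : ℕ → Bool} {s : ℕ} (hx : ∀ k ≤ s, x k = false)
    (hy : ∀ k < s, y k = false) (hys : y s = true) : lexLt x y := by
  exact ⟨s, fun k hk => by rw [hx k (le_of_lt hk), hy k hk], hx s le_rfl, hys⟩

-- L1
theorem good_true_head {u : ℕ → Bool} (hg : Good u) (h0 : u 0 = true) : u = wones := by
  funext i
  have := (hg i).1
  rcases this with he | ⟨n, ha, hf, ht⟩
  · have := congrFun he 0
    rw [shiftk_apply_zero] at this
    rw [← this, h0]; rfl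
  · rcases Nat.eq_zero_or_pos n with rfl | hn
    · rw [h0] at hf; simp at hf
    · have := ha 0 hn
      rw [shiftk_apply_zero] at this
      rw [← this, h0]; rfl

-- L2
theorem good_infinitely_many_true {u : ℕ → Bool} (hg : Good u)
    (hne : u ≠ fun _ => false) : ∀ i, ∃ j, i ≤ j ∧ u j = true := by
  have hex : ∃ p, u p = true := by
    by_contra hc; push_neg at hc
    exact hne (funext fun n => by simpa using hc n)
  obtain ⟨p, hp⟩ := hex
  intro i
  by_contra hc; push_neg at hc
  have hall : ∀ j, i ≤ j → u j = false := by
    intro j hj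
    have := hc j hj
    cases hu : u j
    · rfl
    · exact absurd hu this
  have hpi : p < i := by
    by_contra h'
    rw [hall p (by omega)] at hp; simp at hp
  have := (hg i).1
  rcases this with he | ⟨n, ha, hf, ht⟩
  · have := congrFun he p
    rw [shiftk_at, hall (p + i) (by omega)] at this
    rw [this] at hp; simp at hp
  · rw [shiftk_at, hall (n + i) (by omega)] at ht
    simp at ht

theorem lexLt_zero {x y : ℕ → Bool} (hx : x 0 = false) (hy : y 0 = true) : lexLt x y :=
  ⟨0, fun k hk => absurd hk (Nat.not_lt_zero k), hx, hy⟩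

theorem oneP_eq_prep (x : ℕ → Bool) : oneP x = prep [true] (shiftk 1 x) := by
  funext n
  cases n with
  | zero => rfl
  | succ n =>
    simp only [oneP, prep, shiftk]
    norm_num

theorem oneP_apply_zero (x : ℕ → Bool) : oneP x 0 = true := rfl

theorem shiftk_one_oneP (x : ℕ → Bool) : shiftk 1 (oneP x) = shiftk 1 x := by
  funext n; simp [shiftk, oneP]

theorem applyTau_oneP (h : ℕ) (v : ℕ → Bool) :
    applyTau h (oneP v) = prep (tauL h true) (applyTau h (shiftk 1 v)) := by
  rw [applyTau_step h (oneP v), oneP_apply_zero, shiftk_one_oneP]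

-- L4, case v = wones
theorem applyTau_zero_wones : applyTau 0 wones = wones := by
  have h1 : applyTau 0 wones = prep (tauL 0 true) (applyTau 0 wones) := by
    conv_lhs => rw [applyTau_step 0 wones]
    rfl
  have h2 : wones = prep (tauL 0 true) wones := by
    funext n
    cases n with
    | zero => rfl
    | succ n =>
      rw [prep_ge (by simp [tauL_length])]
      rfl
  exact prep_fixed_unique (tauL_length_pos 0 true) h1 h2

theorem good_applyTau_wones (h : ℕ) : Good (applyTau h wones) := by
  rcases Nat.eq_zero_or_pos h with rfl | hh
  · rw [applyTau_zero_wones]; exact good_wones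
  set u := applyTau h wones with hu
  have hT : ∀ m, applyTau h (shiftk m wones) = u := fun m => rfl
  have htau : ∀ m : ℕ, tauL h (wones m) = repOne h := fun m => by
    rw [show wones m = true from rfl, tauL_eq]
    norm_num
  have hlen : ∀ m : ℕ, (tauL h (wones m)).length = h + 1 := fun m => by
    rw [htau m, repOne_length]
  have hval : ∀ j < h + 1, u j = decide (j = h) := by
    intro j hj
    have := applyTau_block h wones (m := 0) (r := j) (by rw [hlen]; exact hj)
    rw [show posF h wones 0 = 0 from rfl, Nat.zero_add, ← hu] at this
    rw [this, htau, repOne_getD]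
  have hufalse : ∀ k < h, u k = false := fun k hk => by
    rw [hval k (by omega)]; simp; omega
  have hshift : ∀ m r, r ≤ h →
      shiftk (posF h wones m + r) u = prep (repOne (h - r)) u := by
    intro m r hr
    have := shiftk_pos_r h wones (m := m) (r := r) (by rw [hlen]; omega)
    rw [hT (m+1)] at this
    rw [this, htau, repOne_drop hr]
  have hmain : ∀ i, ∃ m r, r ≤ h ∧ i = posF h wones m + r := by
    intro i
    obtain ⟨m, r, hr, hi⟩ := pos_decompose h wones i
    rw [hlen] at hr
    exact ⟨m, r, by omega, hi⟩
  intro i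
  obtain ⟨m, r, hr, hi⟩ := hmain i
  constructor
  · -- u ≤ shiftk i u
    rcases Nat.eq_zero_or_pos r with rfl | hrpos
    · have h0 : shiftk i u = u := by
        rw [hi, Nat.add_zero, hu, applyTau_shift_pos, hT]
      rw [h0]; exact Or.inl rfl
    · right
      rw [hi, hshift m r hr]
      refine lexLt_of_prefix (s := h - r) (fun k hk => hufalse k (by omega)) ?_ ?_
      · intro k hk
        rw [prep_lt (by rw [repOne_length]; omega), repOne_getD]
        simp; omega
      · rw [prep_lt (by rw [repOne_length]; omega), repOne_getD]
        simp
  · -- shiftk i u ≤ oneP u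
    rcases Nat.lt_or_ge r h with hrlt | hrge
    · right
      rw [hi, hshift m r hr]
      refine lexLt_zero ?_ (oneP_apply_zero u)
      rw [prep_lt (by rw [repOne_length]; omega), repOne_getD]
      simp; omega
    · have hrh : r = h := by omega
      rw [hi, hrh, hshift m h le_rfl, Nat.sub_self,
        show repOne 0 = [true] from rfl, oneP_eq_prep]
      apply prep_mono
      right
      have h1 : shiftk 1 u = prep (repOne (h - 1)) u := by
        have := hshift 0 1 hh
        rwa [show posF h wones 0 = 0 from rfl, Nat.zero_add] at this
      rw [h1]
      refine lexLt_of_prefix (s := h - 1) (fun k hk => hufalse k (by omega)) ?_ ?_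
      · intro k hk
        rw [prep_lt (by rw [repOne_length]; omega), repOne_getD]
        simp; omega
      · rw [prep_lt (by rw [repOne_length]; omega), repOne_getD]
        simp

theorem good_applyTau {v : ℕ → Bool} (h : ℕ) (hg : Good v) : Good (applyTau h v) := by
  by_cases hv0 : v 0 = true
  · rw [good_true_head hg hv0]
    exact good_applyTau_wones h
  have hv0' : v 0 = false := by
    cases hb : v 0
    · rfl
    · exact absurd hb hv0
  set u := applyTau h v with hu
  have htau0 : tauL h (v 0) = repOne (h + 1) := by
    rw [hv0', tauL_eq]
    norm_num
  have hval : ∀ j < h + 2, u j = decide (j = h + 1) := by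
    intro j hj
    have := applyTau_block h v (m := 0) (r := j)
      (by rw [htau0, repOne_length]; omega)
    rw [show posF h v 0 = 0 from rfl, Nat.zero_add, ← hu] at this
    rw [this, htau0, repOne_getD]
  have hufalse : ∀ k < h + 1, u k = false := fun k hk => by
    rw [hval k (by omega)]; simp; omega
  have hu0 : u 0 = false := hufalse 0 (by omega)
  intro i
  obtain ⟨m, r, hr, hi⟩ := pos_decompose h v i
  set L := (tauL h (v m)).length with hL
  have hL2 : L = h + cond (v m) 0 1 + 1 := tauL_length h (v m)
  have hLle : L ≤ h + 2 := by rw [hL2]; cases v m <;> simp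
  have hLge : h + 1 ≤ L := by rw [hL2]; cases v m <;> simp
  have htaum : tauL h (v m) = repOne (L - 1) := by
    rw [tauL_eq, hL2]; norm_num
  have hdrop : ∀ r' ≤ L - 1, shiftk (posF h v m + r') u
      = prep (repOne (L - 1 - r')) (applyTau h (shiftk (m + 1) v)) := by
    intro r' hr'
    have := shiftk_pos_r h v (m := m) (r := r') (by omega)
    rw [htaum, repOne_drop hr'] at this
    exact this
  constructor
  · -- u ≤ shiftk i u
    rcases Nat.lt_or_ge r (L - 1) with hrlt | hrge
    · set s := L - 1 - r with hs
      have hs1 : 1 ≤ s := by omega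
      rcases Nat.lt_or_ge s (h + 1) with hslt | hsge
      · right
        rw [hi, hdrop r (by omega)]
        refine lexLt_of_prefix (s := s) (fun k hk => hufalse k (by omega)) ?_ ?_
        · intro k hk
          rw [prep_lt (by rw [repOne_length]; omega), repOne_getD]
          simp; omega
        · rw [prep_lt (by rw [repOne_length]; omega), repOne_getD]
          simp; omega
      · -- s = h + 1, forces r = 0 and L = h + 2
        have hseq : s = h + 1 := by omega
        have hr0 : r = 0 := by omega
        have hieq : i = posF h v m := by omega
        have hsh : shiftk i u = applyTau h (shiftk m v) := by
          rw [hieq, hu, applyTau_shift_pos]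
        rw [hsh, hu]
        exact applyTau_mono (hg m).1
    · -- r = L - 1
      have hreq : r = L - 1 := by omega
      right
      rw [hi, hreq, hdrop (L - 1) le_rfl, Nat.sub_self]
      refine lexLt_zero hu0 ?_
      rw [prep_lt (by rw [repOne_length]; omega), repOne_getD]
      simp
  · -- shiftk i u ≤ oneP u
    rcases Nat.lt_or_ge r (L - 1) with hrlt | hrge
    · right
      rw [hi, hdrop r (by omega)]
      refine lexLt_zero ?_ (oneP_apply_zero u)
      rw [prep_lt (by rw [repOne_length]; omega), repOne_getD]
      simp; omega
    · have hreq : r = L - 1 := by omega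
      have hsh1 : shiftk 1 u = applyTau h (oneP v) := by
        have h1 := shiftk_pos_r h v (m := 0) (r := 1)
          (by rw [htau0, repOne_length]; omega)
        rw [show posF h v 0 + 1 = 1 from rfl, htau0, repOne_drop (by omega),
          show h + 1 - 1 = h from by omega, show (0:ℕ) + 1 = 1 from rfl] at h1
        have htt : tauL h true = repOne h := by rw [tauL_eq]; norm_num
        rw [hu, h1, applyTau_oneP, htt]
      rw [hi, hreq, hdrop (L - 1) le_rfl, Nat.sub_self, oneP_eq_prep, hsh1,
        show repOne 0 = [true] from rfl]
      exact prep_mono (applyTau_mono (hg (m + 1)).2)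

theorem good_applyComp {x : ℕ → Bool} (l : List ℕ) (hg : Good x) : Good (applyComp l x) := by
  induction l with
  | nil => exact hg
  | cons a l ih => exact good_applyTau a ih

theorem applyComp_cons (a : ℕ) (l : List ℕ) (x : ℕ → Bool) :
    applyComp (a :: l) x = applyTau a (applyComp l x) := rfl

theorem applyComp_agree {k : ℕ} {x y : ℕ → Bool} (l : List ℕ) (ha : agree k x y) :
    agree (k + l.sum) (applyComp l x) (applyComp l y) := by
  induction l generalizing k with
  | nil => simpa [applyComp] using ha
  | cons a l ih =>
    have := applyTau_agree (h := a) (ih ha)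
    rw [applyComp_cons, applyComp_cons]
    refine agree_mono ?_ this
    simp [List.sum_cons]; omega

theorem good_of_approx {u : ℕ → Bool}
    (happ : ∀ L, ∃ w, Good w ∧ agree L u w) : Good u := by
  intro i
  constructor
  · by_contra hc
    obtain ⟨n, ha, hf, ht⟩ := not_lexLe hc
    obtain ⟨w, hw, haw⟩ := happ (n + i + 1)
    refine lexLe_not_lt (hw i).1 ⟨n, ?_, ?_, ?_⟩
    · intro k hk
      rw [shiftk_at, ← haw (k + i) (by omega), ← haw k (by omega)]
      rw [← shiftk_at u i k]
      exact ha k hk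
    · rw [shiftk_at, ← haw (n + i) (by omega)]
      exact hf
    · rw [← haw n (by omega)]
      exact ht
  · by_contra hc
    obtain ⟨n, ha, hf, ht⟩ := not_lexLe hc
    obtain ⟨w, hw, haw⟩ := happ (n + i + 1)
    refine lexLe_not_lt (hw i).2 ⟨n, ?_, ?_, ?_⟩
    · intro k hk
      have := ha k hk
      rw [shiftk_at, ← haw (k + i) (by omega)]
      rw [shiftk_at] at this
      rw [← this]
      rcases Nat.eq_zero_or_pos k with rfl | hk0
      · rfl
      · show (if k = 0 then true else w k) = (if k = 0 then true else u k)
        rw [if_neg (by omega), if_neg (by omega), haw k (by omega)]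
    · have hn0 : n ≠ 0 := by
        intro h0
        subst h0
        simp [oneP] at hf
      simp only [oneP, if_neg hn0] at hf ⊢
      rw [← haw n (by omega)]
      exact hf
    · rw [shiftk_at, ← haw (n + i) (by omega)]
      rw [shiftk_at] at ht
      exact ht

theorem applyComp_append (l l' : List ℕ) (x : ℕ → Bool) :
    applyComp (l ++ l') x = applyComp l (applyComp l' x) := by
  simp [applyComp, List.foldr_append]

theorem good_of_primitive {u : ℕ → Bool} (hp : IsPrimitiveLimitWord u) : Good u := by
  obtain ⟨hs, hprim, U, hU0, hrec⟩ := hp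
  have hcomp : ∀ n, u = applyComp ((List.range n).map hs) (U n) := by
    intro n
    induction n with
    | zero => simpa [applyComp] using hU0.symm
    | succ n ih =>
      rw [List.range_succ, List.map_append, applyComp_append]
      have h1 : U n = applyComp (List.map hs [n]) (U (n + 1)) := by
        simpa [applyComp] using hrec n
      rw [ih, ← h1]
  have hmono : ∀ n m, n ≤ m →
      ((List.range n).map hs).sum ≤ ((List.range m).map hs).sum := by
    intro n m hnm
    induction m with
    | zero =>
      have : n = 0 := Nat.le_zero.mp hnm
      subst this
      exact le_rfl
    | succ m ih =>
      rcases Nat.lt_or_ge n (m + 1) with h' | h'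
      · have := ih (by omega)
        rw [List.range_succ, List.map_append, List.sum_append]
        simp
        omega
      · have : n = m + 1 := by omega
        subst this
        exact le_rfl
  have hsum : ∀ L, ∃ n, L ≤ ((List.range n).map hs).sum := by
    intro L
    induction L with
    | zero => exact ⟨0, Nat.zero_le _⟩
    | succ L ih =>
      obtain ⟨n, hn⟩ := ih
      obtain ⟨m, hm, hm0⟩ := hprim n
      refine ⟨m + 1, ?_⟩
      have h1 := hmono n m hm
      have h2 : ((List.range (m+1)).map hs).sum = ((List.range m).map hs).sum + hs m := by
        rw [List.range_succ, List.map_append, List.sum_append]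
        simp
      omega
  apply good_of_approx
  intro L
  obtain ⟨n, hn⟩ := hsum L
  refine ⟨applyComp ((List.range n).map hs) wones, good_applyComp _ good_wones, ?_⟩
  rw [hcomp n]
  have := applyComp_agree ((List.range n).map hs)
    (show agree 0 (U n) wones from fun j hj => absurd hj (Nat.not_lt_zero j))
  refine agree_mono ?_ this
  omega

-- ===== desubstitution =====

theorem exq (u : ℕ → Bool) (hex : ∀ i, ∃ j, i ≤ j ∧ u j = true) (q : ℕ) :
    ∃ j, q < j ∧ u j = true := by
  obtain ⟨j, h1, h2⟩ := hex (q + 1)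
  exact ⟨j, by omega, h2⟩

noncomputable def qSeq (u : ℕ → Bool) (hex : ∀ i, ∃ j, i ≤ j ∧ u j = true) : ℕ → ℕ
  | 0 => Nat.find ((hex 0).imp fun j h => h.2)
  | k + 1 => Nat.find (exq u hex (qSeq u hex k))

theorem qSeq_true (u : ℕ → Bool) (hex : ∀ i, ∃ j, i ≤ j ∧ u j = true) (k : ℕ) :
    u (qSeq u hex k) = true := by
  cases k with
  | zero => exact Nat.find_spec ((hex 0).imp fun j h => h.2)
  | succ k => exact (Nat.find_spec (exq u hex (qSeq u hex k))).2

theorem qSeq_zero_min (u : ℕ → Bool) (hex : ∀ i, ∃ j, i ≤ j ∧ u j = true)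
    {j : ℕ} (hj : j < qSeq u hex 0) : u j = false := by
  have := Nat.find_min ((hex 0).imp fun j h => h.2) hj
  cases hb : u j
  · rfl
  · exact absurd hb this

theorem qSeq_lt_succ (u : ℕ → Bool) (hex : ∀ i, ∃ j, i ≤ j ∧ u j = true) (k : ℕ) :
    qSeq u hex k < qSeq u hex (k + 1) :=
  (Nat.find_spec (exq u hex (qSeq u hex k))).1

theorem qSeq_succ_min (u : ℕ → Bool) (hex : ∀ i, ∃ j, i ≤ j ∧ u j = true)
    {k j : ℕ} (h1 : qSeq u hex k < j) (h2 : j < qSeq u hex (k + 1)) : u j = false := by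
  have := Nat.find_min (exq u hex (qSeq u hex k)) h2
  cases hb : u j
  · rfl
  · exact absurd (⟨h1, hb⟩ : _ ∧ _) this

theorem qSeq_succ_le (u : ℕ → Bool) (hex : ∀ i, ∃ j, i ≤ j ∧ u j = true)
    {k j : ℕ} (h1 : qSeq u hex k < j) (h2 : u j = true) : qSeq u hex (k + 1) ≤ j :=
  Nat.find_le ⟨h1, h2⟩

theorem lexLe_tail {x y : ℕ → Bool} (h : lexLe x y) (h0 : x 0 = y 0) :
    lexLe (shiftk 1 x) (shiftk 1 y) := by
  rcases h with he | ⟨n, ha, hf, ht⟩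
  · exact Or.inl (by rw [he])
  · rcases Nat.eq_zero_or_pos n with rfl | hn
    · rw [h0, ht] at hf; simp at hf
    · refine Or.inr ⟨n - 1, fun k hk => ?_, ?_, ?_⟩
      · show x (k + 1) = y (k + 1)
        exact ha (k + 1) (by omega)
      · show x (n - 1 + 1) = false
        rw [show n - 1 + 1 = n from by omega]; exact hf
      · show y (n - 1 + 1) = true
        rw [show n - 1 + 1 = n from by omega]; exact ht

theorem good_desub {u : ℕ → Bool} (hg : Good u) (hu0 : u 0 = false)
    (hne : u ≠ fun _ => false) :
    ∃ h v, u = applyTau h v ∧ Good v ∧ v ≠ fun _ => false := by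
  classical
  have hex := good_infinitely_many_true hg hne
  set q : ℕ → ℕ := qSeq u hex with hqdef
  have hqt : ∀ k, u (q k) = true := qSeq_true u hex
  have hq0min : ∀ j < q 0, u j = false := fun j hj => qSeq_zero_min u hex hj
  have hqlt : ∀ k, q k < q (k + 1) := qSeq_lt_succ u hex
  have hqmin : ∀ k j, q k < j → j < q (k + 1) → u j = false :=
    fun k j h1 h2 => qSeq_succ_min u hex h1 h2
  have hqle : ∀ k j, q k < j → u j = true → q (k + 1) ≤ j :=
    fun k j h1 h2 => qSeq_succ_le u hex h1 h2
  set a := q 0 with hadef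
  have ha1 : 1 ≤ a := by
    rcases Nat.eq_zero_or_pos a with h0 | h0
    · have h2 : u a = true := hqt 0
      rw [h0, hu0] at h2
      simp at h2
    · exact h0
  set h := a - 1 with hhdef
  have hah : a = h + 1 := by omega
  -- F-upper
  have hFU : ∀ j, u j = true → ∀ t, t < a - 1 → u (j + 1 + t) = false := by
    intro j hj t ht
    have h2 := (hg j).2
    have h0 : shiftk j u 0 = oneP u 0 := by
      rw [shiftk_apply_zero, hj, oneP_apply_zero]
    have h3 := lexLe_tail h2 h0
    rw [shiftk_one_shiftk, shiftk_one_oneP] at h3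
    have h4 : ∀ k < a - 1, shiftk 1 u k = false := by
      intro k hk
      rw [shiftk_at]
      exact hq0min (k + 1) (by omega)
    have h5 := lexLe_false_prefix h3 h4 t ht
    rw [shiftk_at] at h5
    rw [show j + 1 + t = t + (j + 1) from by omega]
    exact h5
  -- F-lower
  have hFL : ∀ j, ∃ t, 1 ≤ t ∧ t ≤ a + 1 ∧ u (j + t) = true := by
    intro j
    by_contra hc
    push_neg at hc
    have h4 : ∀ k < a + 1, shiftk (j + 1) u k = false := by
      intro k hk
      rw [shiftk_at]
      have := hc (k + 1) (by omega) (by omega)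
      rw [show k + (j + 1) = j + (k + 1) from by omega]
      cases hb : u (j + (k + 1))
      · rfl
      · exact absurd hb this
    have h5 := lexLe_false_prefix (hg (j + 1)).1 h4 a (by omega)
    rw [hqt 0] at h5
    simp at h5
  -- gap bounds
  have hgap_low : ∀ k, q k + a ≤ q (k + 1) := by
    intro k
    by_contra hc
    push_neg at hc
    have h1 : q k < q (k + 1) := hqlt k
    set t := q (k + 1) - q k with htdef
    have ht1 : 1 ≤ t := by omega
    have ht2 : t - 1 < a - 1 := by omega
    have := hFU (q k) (hqt k) (t - 1) ht2
    rw [show q k + 1 + (t - 1) = q (k + 1) from by omega, hqt (k + 1)] at this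
    simp at this
  have hgap_high : ∀ k, q (k + 1) ≤ q k + a + 1 := by
    intro k
    obtain ⟨t, ht1, ht2, ht3⟩ := hFL (q k)
    have := hqle k (q k + t) (by omega) ht3
    omega
  -- the desubstituted word
  set rp : ℕ → ℕ := fun k => if k = 0 then 0 else q (k - 1) + 1 with hrpdef
  have hrp0 : rp 0 = 0 := rfl
  have hrps : ∀ k, rp (k + 1) = q k + 1 := fun k => rfl
  set v : ℕ → Bool := fun k => decide (rp (k + 1) - rp k = h + 1) with hvdef
  have hv0 : v 0 = false := by
    show decide (rp 1 - rp 0 = h + 1) = false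
    rw [hrp0, hrps 0]
    simp
    omega
  have hlen : ∀ k, rp (k + 1) = rp k + (tauL h (v k)).length := by
    intro k
    rw [tauL_length]
    cases k with
    | zero =>
      rw [hrp0, hrps 0, hv0]
      simp
      omega
    | succ k =>
      have hl := hgap_low k
      have hh' := hgap_high k
      have hveq : v (k + 1) = decide (q (k + 1) - q k = h + 1) := by
        have harg : rp (k + 1 + 1) - rp (k + 1) = q (k + 1) - q k := by
          rw [hrps, hrps]; omega
        show decide (rp (k + 1 + 1) - rp (k + 1) = h + 1) = _
        rw [harg]
      rw [hrps, hrps, hveq]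
      by_cases hgap : q (k + 1) - q k = h + 1
      · rw [decide_eq_true hgap]
        simp only [cond]
        omega
      · rw [decide_eq_false hgap]
        simp only [cond]
        omega

  have hLpos : ∀ k, 1 ≤ (tauL h (v k)).length := fun k => tauL_length_pos h (v k)
  have htauv : ∀ k, tauL h (v k) = repOne ((tauL h (v k)).length - 1) := by
    intro k
    rw [tauL_length, tauL_eq]
    simp
  have hblock : ∀ k j, j < (tauL h (v k)).length →
      u (rp k + j) = (tauL h (v k)).getD j false := by
    intro k j hj
    rw [htauv k, repOne_getD]
    rcases Nat.lt_or_ge j ((tauL h (v k)).length - 1) with hj' | hj'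
    · rw [decide_eq_false (by omega)]
      cases k with
      | zero =>
        apply hq0min
        have e1 := hlen 0
        have e2 := hrps 0
        rw [hrp0] at e1 ⊢
        omega
      | succ k =>
        apply hqmin k
        · have e2 := hrps k
          omega
        · have e1 := hlen (k + 1)
          have e2 := hrps k
          have e3 := hrps (k + 1)
          omega
    · have hje : j = (tauL h (v k)).length - 1 := by omega
      rw [decide_eq_true hje]
      have hidx : rp k + j = q k := by
        have e1 := hlen k
        have e3 := hrps k
        have := hLpos k
        omega
      rw [hidx, hqt k]
  have hmain : ∀ n k, applyTau h (shiftk k v) n = u (rp k + n) := by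
    intro n
    induction n using Nat.strong_induction_on with
    | _ n ih =>
      intro k
      rw [applyTau_step' h k v]
      rcases Nat.lt_or_ge n (tauL h (v k)).length with hn | hn
      · rw [prep_lt hn]
        exact (hblock k n hn).symm
      · rw [prep_ge hn]
        rw [ih (n - (tauL h (v k)).length) (by have := hLpos k; omega) (k + 1)]
        congr 1
        have := hlen k
        omega
  have huv : u = applyTau h v := by
    funext n
    have hm := hmain n 0
    rw [shiftk_zero, hrp0, Nat.zero_add] at hm
    exact hm.symm
  have hTm : ∀ m, applyTau h (shiftk m v) = shiftk (rp m) u := by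
    intro m
    funext n
    rw [hmain n m, shiftk_at, Nat.add_comm]
  have hGv : Good v := by
    intro m
    constructor
    · apply applyTau_reflect (h := h)
      rw [hTm m, ← huv]
      exact (hg (rp m)).1
    · cases m with
      | zero =>
        rw [shiftk_zero]
        exact Or.inr (lexLt_zero hv0 (oneP_apply_zero v))
      | succ m =>
        apply applyTau_reflect (h := h)
        have htt : tauL h true = repOne h := by rw [tauL_eq]; norm_num
        have honeP : applyTau h (oneP v) = shiftk 1 u := by
          have h1 := shiftk_pos_r h v (m := 0) (r := 1) (hLpos 0)
          rw [show posF h v 0 + 1 = 1 from rfl, ← huv,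
            show (0:ℕ) + 1 = 1 from rfl, hv0] at h1
          have hdrop1 : (tauL h false).drop 1 = repOne h := by
            rw [show tauL h false = repOne (h + 1) from by rw [tauL_eq]; norm_num,
              repOne_drop (by omega)]
            norm_num
          rw [hdrop1, hTm 1] at h1
          rw [applyTau_oneP, hTm 1, htt]
          exact h1.symm
        rw [honeP, hTm (m + 1), hrps m]
        have h2 := (hg (q m)).2
        have h0 : shiftk (q m) u 0 = oneP u 0 := by
          rw [shiftk_apply_zero, hqt m, oneP_apply_zero]
        have h3 := lexLe_tail h2 h0
        rw [shiftk_one_shiftk, shiftk_one_oneP] at h3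
        exact h3
  by_cases hvz : v = fun _ => false
  · refine ⟨h + 1, wones, ?_, good_wones, ?_⟩
    · rw [huv, hvz]
      have hx : applyTau h (fun _ => false)
          = prep (repOne (h + 1)) (applyTau h (fun _ => false)) := by
        conv_lhs => rw [applyTau_step]
        rw [show tauL h ((fun _ : ℕ => false) 0) = repOne (h + 1) from by
          rw [tauL_eq]; norm_num]
        rfl
      have hy : applyTau (h + 1) wones
          = prep (repOne (h + 1)) (applyTau (h + 1) wones) := by
        conv_lhs => rw [applyTau_step]
        rw [show tauL (h + 1) (wones 0) = repOne (h + 1) from by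
          rw [show wones 0 = true from rfl, tauL_eq]; norm_num]
        rfl
      exact prep_fixed_unique (by rw [repOne_length]; omega) hx hy
    · intro hcon
      have := congrFun hcon 0
      simp [wones] at this
  · exact ⟨h, v, huv, hGv, hvz⟩

theorem good_step {w : ℕ → Bool} (hg : Good w) (hne : w ≠ fun _ => false) :
    ∃ h v, w = applyTau h v ∧ Good v ∧ v ≠ fun _ => false := by
  by_cases h0 : w 0 = true
  · refine ⟨0, wones, ?_, good_wones, ?_⟩
    · rw [good_true_head hg h0, applyTau_zero_wones]
    · intro hc
      have := congrFun hc 0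
      simp [wones] at this
  · exact good_desub hg (by
      cases hb : w 0 with
      | false => rfl
      | true => exact absurd hb h0) hne

theorem ones_prefix_applyTau0 : ∀ (k : ℕ) (x : ℕ → Bool), (∀ j < k, x j = true) →
    ∀ s < k, applyTau 0 x s = true := by
  intro k
  induction k with
  | zero => intro x hx s hs; omega
  | succ k ih =>
    intro x hx s hs
    rw [applyTau_step 0 x, hx 0 (by omega), show tauL 0 true = [true] from rfl]
    rcases Nat.eq_zero_or_pos s with rfl | hs0
    · rw [prep_lt (by simp)]
      rfl
    · rw [prep_ge (by simp; omega)]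
      exact ih (shiftk 1 x) (fun j hj => hx (j + 1) (by omega)) (s - 1)
        (by show s - 1 < k; omega)

theorem pk_step {k : ℕ} {y : ℕ → Bool}
    (hy : ∀ p, y p = false → ∀ j, 1 ≤ j → j ≤ k → y (p + j) = true) :
    ∀ p, applyTau 0 y p = false → ∀ j, 1 ≤ j → j ≤ k + 1 → applyTau 0 y (p + j) = true := by
  intro p hp j hj1 hj2
  obtain ⟨m, r, hr, hpe⟩ := pos_decompose 0 y p
  have hval := applyTau_block 0 y hr
  rw [← hpe] at hval
  rw [hval, tauL_getD] at hp
  have hym : y m = false := by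
    cases hb : y m with
    | false => rfl
    | true =>
      exfalso
      rw [hb, tauL_length] at hr
      rw [hb] at hp
      simp at hp hr
      omega
  have hr0 : r = 0 := by
    rw [hym, tauL_length] at hr
    rw [hym] at hp
    simp at hp hr
    omega
  have hpos1 : posF 0 y (m + 1) = p + 2 := by
    have : posF 0 y (m + 1) = posF 0 y m + (tauL 0 (y m)).length := rfl
    rw [this, hym, tauL_length]
    simp only [Bool.cond_false]
    omega
  have htail : ∀ s, applyTau 0 y (p + 2 + s) = applyTau 0 (shiftk (m + 1) y) s := by
    intro s
    have := congrFun (applyTau_shift_pos 0 y (m + 1)) s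
    rw [shiftk_at, hpos1] at this
    rw [← this, Nat.add_comm]
  rcases Nat.lt_or_ge j 2 with hj2' | hj2'
  · have hj : j = 1 := by omega
    subst hj
    have hb1 := applyTau_block 0 y (m := m) (r := 1)
      (by rw [hym, tauL_length]; simp)
    have hp1 : p + 1 = posF 0 y m + 1 := by omega
    rw [hp1, hb1, tauL_getD, hym]
    simp
  · have : p + j = p + 2 + (j - 2) := by omega
    rw [this, htail (j - 2)]
    apply ones_prefix_applyTau0 k (shiftk (m + 1) y) _ (j - 2) (by omega)
    intro t ht
    rw [shiftk_at, show t + (m + 1) = m + (t + 1) from by omega]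
    exact hy m hym (t + 1) (by omega) (by omega)

theorem pk_of_comp : ∀ (k : ℕ) (w x : ℕ → Bool), w = applyComp (List.replicate k 0) x →
    ∀ p, w p = false → ∀ j, 1 ≤ j → j ≤ k → w (p + j) = true := by
  intro k
  induction k with
  | zero => intro w x hw p hp j h1 h2; omega
  | succ k ih =>
    intro w x hw p hp j h1 h2
    rw [List.replicate_succ, applyComp_cons] at hw
    subst hw
    exact pk_step (ih _ x rfl) p hp j h1 h2

theorem wzo_zero : wzo 0 = false := rfl

theorem good_tau0_chain {w : ℕ → Bool} (hg : Good w)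
    (hch : ∀ k, ∃ x, w = applyComp (List.replicate k 0) x) :
    w = wones ∨ w = wzo := by
  by_cases h0 : w 0 = true
  · exact Or.inl (good_true_head hg h0)
  · right
    have h0' : w 0 = false := by
      cases hb : w 0 with
      | false => rfl
      | true => exact absurd hb h0
    funext n
    cases n with
    | zero => exact h0'
    | succ n =>
      obtain ⟨x, hx⟩ := hch (n + 1)
      have := pk_of_comp (n + 1) w x hx 0 h0' (n + 1) (by omega) le_rfl
      rw [Nat.zero_add] at this
      rw [this]
      simp [wzo]


/-- a nonzero infinite binary word satisfies
u ≤ σ^i(u) ≤ 1u_1u_2… (lexicographically, for all shifts i) iff it is an S-adic word: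
a primitive limit word, or σ(0·1^ω) or σ(1^ω) for a finite composition σ. -/
theorem stmt_7 (u : ℕ → Bool) (hu : u ≠ fun _ => false) :
    (∀ i : ℕ, lexLe u (fun n => u (n + i)) ∧
        lexLe (fun n => u (n + i)) (fun n => if n = 0 then true else u n))
    ↔ (IsPrimitiveLimitWord u ∨
        (∃ hs : List ℕ, u = applyComp hs fun n => decide (0 < n)) ∨
        (∃ hs : List ℕ, u = applyComp hs fun _ => true)) := by
  constructor
  · intro hC
    have hg : Good u := hC
    have hstep : ∀ w : {w : ℕ → Bool // Good w ∧ w ≠ fun _ => false},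
        ∃ p : ℕ × {w' : ℕ → Bool // Good w' ∧ w' ≠ fun _ => false},
          w.1 = applyTau p.1 p.2.1 := by
      rintro ⟨w, hw1, hw2⟩
      obtain ⟨h, v, he, hgv, hvne⟩ := good_step hw1 hw2
      exact ⟨⟨h, ⟨v, hgv, hvne⟩⟩, he⟩
    choose F hF using hstep
    let Useq : ℕ → {w : ℕ → Bool // Good w ∧ w ≠ fun _ => false} :=
      fun n => Nat.rec ⟨u, hg, hu⟩ (fun _ w => (F w).2) n
    have hUrec : ∀ n, (Useq n).1 = applyTau ((F (Useq n)).1) (Useq (n + 1)).1 :=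
      fun n => hF (Useq n)
    by_cases hprim : ∀ N, ∃ n ≥ N, (F (Useq n)).1 ≠ 0
    · left
      exact ⟨fun n => (F (Useq n)).1, hprim, fun n => (Useq n).1, rfl, hUrec⟩
    · push_neg at hprim
      obtain ⟨N, hN⟩ := hprim
      have hcompN : ∀ n,
          u = applyComp ((List.range n).map (fun m => (F (Useq m)).1)) (Useq n).1 := by
        intro n
        induction n with
        | zero => rfl
        | succ n ih =>
          rw [List.range_succ, List.map_append, applyComp_append]
          have h1 : (Useq n).1
              = applyComp (List.map (fun m => (F (Useq m)).1) [n]) (Useq (n + 1)).1 := by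
            simpa [applyComp] using hUrec n
          rw [ih, ← h1]
      have hch : ∀ k, ∃ x, (Useq N).1 = applyComp (List.replicate k 0) x := by
        intro k
        refine ⟨(Useq (N + k)).1, ?_⟩
        induction k with
        | zero => rfl
        | succ k ih =>
          have h2 := hUrec (N + k)
          rw [hN (N + k) (by omega)] at h2
          have h3 : (Useq (N + k)).1 = applyComp [0] (Useq (N + (k + 1))).1 := by
            simpa [applyComp, Nat.add_assoc] using h2
          rw [List.replicate_succ', applyComp_append, ← h3]
          exact ih
      rcases good_tau0_chain (Useq N).2.1 hch with hw | hw
      · right; right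
        refine ⟨(List.range N).map (fun m => (F (Useq m)).1), ?_⟩
        rw [hcompN N, hw]
        rfl
      · right; left
        refine ⟨(List.range N).map (fun m => (F (Useq m)).1), ?_⟩
        rw [hcompN N, hw]
        rfl
  · rintro (hp | ⟨l, rfl⟩ | ⟨l, rfl⟩)
    · exact good_of_primitive hp
    · exact good_applyComp l good_wzo
    · exact good_applyComp l good_wones
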